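/- Let m be a positive even integer and r an integer with r² ≡ 1 (mod m), and set w = m / gcd(r + 1, m). Then the affine map e^{w}.r : ℤ_m → ℤ_m, x ↦ r·x + w, is a quasipolarity if and only if 2·(m / gcd(r + 1, m)) = gcd(r − 1, m). -/

import Mathlib

/-- The affine map `e^a.b : ZMod m → ZMod m`, `x ↦ b*x + a`. -/
def affineMap (m : ℕ) (a b : ℤ) : ZMod m → ZMod m :=
  fun x => (b : ZMod m) * x + (a : ZMod m)

/-- `e^a.b` is a quasipolarity if it is an involution without fixed points. -/
def IsQuasipolarity (m : ℕ) (a b : ℤ) : Prop :=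
  (affineMap m a b) ∘ (affineMap m a b) = id ∧ ∀ x : ZMod m, affineMap m a b x ≠ x

/-- The canonical injection `ι : ZMod n → ZMod (p*n)`, sending the class of `x`
modulo `n` to the class of `p*x` modulo `p*n`. -/
def iota (p n : ℕ) (x : ZMod n) : ZMod (p * n) := ((p * x.val : ℕ) : ZMod (p * n))

theorem stmt10 (m : ℕ) (hm : 0 < m) (hme : Even m) (r : ℤ)
    (hr : r ^ 2 ≡ 1 [ZMOD (m : ℤ)]) (w : ℕ) (hw : w = m / Int.gcd (r + 1) (m : ℤ)) :
    IsQuasipolarity m (w : ℤ) r ↔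
      2 * (m / Int.gcd (r + 1) (m : ℤ)) = Int.gcd (r - 1) (m : ℤ) := by
  set d := Int.gcd (r + 1) (m : ℤ) with hd
  set g := Int.gcd (r - 1) (m : ℤ) with hg
  have hm0 : (m : ℤ) ≠ 0 := by exact_mod_cast hm.ne'
  have hmdvd : (m : ℤ) ∣ (r - 1) * (r + 1) := by
    have h := hr.dvd
    have : (r - 1) * (r + 1) = -(1 - r ^ 2) := by ring
    rw [this]
    exact dvd_neg.mpr h
  have hdpos : 0 < d := Int.gcd_pos_of_ne_zero_right _ hm0
  have hddvdm : d ∣ m := by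
    have : (d : ℤ) ∣ (m : ℤ) := Int.gcd_dvd_right _ _
    exact_mod_cast this
  have hmdw : m = d * w := by rw [hw, Nat.mul_div_cancel' hddvdm]
  have hwpos : 0 < w := by
    rw [hw]; exact Nat.div_pos (Nat.le_of_dvd hm hddvdm) hdpos
  have hdne : (d : ℤ) ≠ 0 := by exact_mod_cast hdpos.ne'
  have hddvd : (d : ℤ) ∣ r + 1 := Int.gcd_dvd_left _ _
  obtain ⟨u, hu⟩ := hddvd
  -- coprime u w
  have hcop : IsCoprime (w : ℤ) u := by
    have h1 : Int.gcd ((r + 1) / d) ((m : ℤ) / d) = 1 := Int.gcd_div_gcd_div_gcd hdpos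
    have h2 : (r + 1) / (d : ℤ) = u := by rw [hu, Int.mul_ediv_cancel_left _ hdne]
    have h3 : (m : ℤ) / (d : ℤ) = (w : ℤ) := by
      rw [hmdw]; push_cast; exact Int.mul_ediv_cancel_left _ hdne
    rw [h2, h3] at h1
    exact Int.isCoprime_iff_gcd_eq_one.mpr (by rw [Int.gcd_comm]; exact h1)
  -- w ∣ r - 1
  have hwdvd : (w : ℤ) ∣ r - 1 := by
    have h1 : ((d : ℤ) * w) ∣ (r - 1) * ((d : ℤ) * u) := by
      rw [← hu]
      have : ((m : ℕ) : ℤ) = (d : ℤ) * w := by exact_mod_cast hmdw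
      rw [← this]; exact hmdvd
    have h1' : (d:ℤ) * (w:ℤ) ∣ (d:ℤ) * ((r-1)*u) := by
      rw [show (r-1) * ((d:ℤ)*u) = (d:ℤ) * ((r-1)*u) by ring] at h1; exact h1
    exact hcop.dvd_of_dvd_mul_right ((mul_dvd_mul_iff_left hdne).mp h1')
  have hwdvdm : w ∣ m := ⟨d, by rw [hmdw]; ring⟩
  have hwdvdg : w ∣ g := by
    have : w ∣ g := Int.dvd_gcd hwdvd (Int.natCast_dvd_natCast.mpr hwdvdm)
    exact_mod_cast this
  have hgdvdm : g ∣ m := by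
    have : (g : ℤ) ∣ (m : ℤ) := Int.gcd_dvd_right _ _
    exact_mod_cast this
  -- gcd d g ∣ 2
  have hgcd2 : Nat.gcd d g ∣ 2 := by
    have h1 : ((Nat.gcd d g : ℕ) : ℤ) ∣ r + 1 := (Int.natCast_dvd_natCast.mpr (Nat.gcd_dvd_left d g)).trans (Int.gcd_dvd_left _ _)
    have h2 : ((Nat.gcd d g : ℕ) : ℤ) ∣ r - 1 := (Int.natCast_dvd_natCast.mpr (Nat.gcd_dvd_right d g)).trans (Int.gcd_dvd_left _ _)
    have h3 : ((Nat.gcd d g : ℕ) : ℤ) ∣ 2 := by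
      have := dvd_sub h1 h2
      simpa using this
    exact_mod_cast h3
  have hdg2m : d * g ∣ 2 * m := by
    have := Nat.gcd_mul_lcm d g
    calc d * g = Nat.gcd d g * Nat.lcm d g := this.symm
    _ ∣ 2 * m := mul_dvd_mul hgcd2 (Nat.lcm_dvd hddvdm hgdvdm)
  have hg2w : g ∣ 2 * w := by
    have : d * g ∣ d * (2 * w) := by
      rw [show d * (2*w) = 2 * (d*w) by ring, ← hmdw]; exact hdg2m
    exact (Nat.mul_dvd_mul_iff_left hdpos).mp this
  have hgpos : 0 < g := Int.gcd_pos_of_ne_zero_right _ hm0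
  -- involution always holds
  have hinv : (affineMap m (w : ℤ) r) ∘ (affineMap m (w : ℤ) r) = id := by
    funext x
    simp only [affineMap, Function.comp_apply, id_eq]
    have hr2 : ((r : ZMod m))^2 = 1 := by
      have := (ZMod.intCast_eq_intCast_iff _ _ _).mpr hr
      push_cast at this
      exact this
    have hrw : ((r : ZMod m) + 1) * (w : ZMod m) = 0 := by
      have hdvd : (m : ℤ) ∣ (r + 1) * w := by
        refine ⟨u, ?_⟩
        rw [hu, hmdw]; push_cast; ring
      have := (ZMod.intCast_zmod_eq_zero_iff_dvd ((r+1)*w) m).mpr hdvd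
      push_cast at this
      exact this
    push_cast
    linear_combination x * hr2 + hrw
  -- fixed point condition
  have hfix : (∃ x : ZMod m, affineMap m (w : ℤ) r x = x) ↔ g ∣ w := by
    constructor
    · rintro ⟨x, hx⟩
      simp only [affineMap] at hx
      -- lift
      haveI : NeZero m := ⟨hm.ne'⟩
      have hx0 : ((x.val : ℕ) : ZMod m) = x := ZMod.natCast_rightInverse x
      have hx' : ((r * x.val + w : ℤ) : ZMod m) = ((x.val : ℤ) : ZMod m) := by
        push_cast
        rw [hx0]
        exact_mod_cast hx
      have hmod := (ZMod.intCast_eq_intCast_iff _ _ _).mp hx'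
      have hdvd : (m : ℤ) ∣ (x.val : ℤ) - (r * x.val + w) := hmod.dvd
      have hgdvd : (g : ℤ) ∣ (w : ℤ) := by
        have h1 : (g : ℤ) ∣ r - 1 := Int.gcd_dvd_left _ _
        have h2 : (g : ℤ) ∣ (m : ℤ) := Int.gcd_dvd_right _ _
        have h3 : (g : ℤ) ∣ (x.val : ℤ) - (r * x.val + w) := h2.trans hdvd
        have : (w : ℤ) = -((x.val:ℤ) - (r * x.val + w)) - (r - 1) * x.val := by ring
        rw [this]
        exact dvd_sub (dvd_neg.mpr h3) (h1.mul_right _)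
      exact_mod_cast hgdvd
    · intro hdvd
      obtain ⟨k, hk⟩ := hdvd
      refine ⟨((-(Int.gcdA (r-1) (m:ℤ)) * k : ℤ) : ZMod m), ?_⟩
      simp only [affineMap]
      have hbez : (g : ℤ) = (r - 1) * Int.gcdA (r-1) (m:ℤ) + (m:ℤ) * Int.gcdB (r-1) (m:ℤ) :=
        Int.gcd_eq_gcd_ab (r-1) (m:ℤ)
      have hm0' : ((m : ℤ) : ZMod m) = 0 := by
        simpa using (ZMod.natCast_self m)
      have key : ((g : ℤ) : ZMod m) = ((r:ZMod m) - 1) * ((Int.gcdA (r-1) (m:ℤ) : ℤ) : ZMod m) := by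
        have := congrArg (Int.cast : ℤ → ZMod m) hbez
        push_cast at this ⊢
        rw [this, ZMod.natCast_self]; ring
      have hwg : ((w : ℕ) : ZMod m) = ((g:ℤ) : ZMod m) * ((k : ℤ) : ZMod m) := by
        have : ((w:ℕ):ℤ) = (g:ℤ) * k := by exact_mod_cast hk
        calc ((w : ℕ) : ZMod m) = (((w:ℕ):ℤ) : ZMod m) := by push_cast; ring
        _ = (((g:ℤ) * k : ℤ) : ZMod m) := by rw [this]
        _ = _ := by push_cast; ring
      push_cast at hwg key ⊢
      rw [hwg, key]
      push_cast
      ring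
  constructor
  · rintro ⟨_, hnf⟩
    have hngw : ¬ g ∣ w := by
      intro h
      obtain ⟨x, hx⟩ := hfix.mpr h
      exact hnf x hx
    -- g ∣ 2w, w ∣ g, ¬ g ∣ w ⇒ g = 2w
    obtain ⟨c, hc⟩ := hwdvdg
    have hc2 : c ∣ 2 := by
      have : w * c ∣ w * 2 := by rw [← hc, mul_comm w 2]; exact hg2w
      exact (Nat.mul_dvd_mul_iff_left hwpos).mp this
    have hcle : c ≤ 2 := Nat.le_of_dvd (by norm_num) hc2
    have hcpos : 0 < c := by
      rcases Nat.eq_zero_or_pos c with h0 | h0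
      · subst h0; simp at hc; omega
      · exact h0
    interval_cases c
    · exfalso; exact hngw (by simp [hc])
    · rw [← hw]; omega
  · intro h
    refine ⟨hinv, ?_⟩
    intro x hx
    have h2 : g ∣ w := hfix.mp ⟨x, hx⟩
    have h3 : g ≤ w := Nat.le_of_dvd hwpos h2
    rw [← hw] at h
    omega
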